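/- (Appendix Claim 4.) Let t ≥ 1 be an integer with t ≤ n. For any two arrays X₁, X_{t+1} ∈ Σ_q^{n^{⊗d}}, it holds that D_{t𝟏}(X₁) ∩ D_{t𝟏}(X_{t+1}) ≠ ∅ if and only if there exist t − 1 arrays X₂, …, X_t ∈ Σ_q^{n^{⊗d}} such that D_{𝟏}(X_i) ∩ D_{𝟏}(X_{i+1}) ≠ ∅ for all 1 ≤ i ≤ t, where 𝟏 = (1, …, 1) is the all-one vector of length d. -/

import Mathlib

/-- A `q`-ary `d`-dimensional array: a size vector `size : Fin d → ℕ` together with an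
entry of the alphabet `Fin q` for every index tuple inside the box
`[size 0] × ⋯ × [size (d-1)]`. -/
structure Arr (q d : ℕ) where
  size : Fin d → ℕ
  val : ∀ x : Fin d → ℕ, (∀ i, x i < size i) → Fin q

/-- The index map associated with inserting a hyperplane at position `k` along axis `i`:
coordinates below `k` stay put, the others are shifted up by one (so that position `k`
along axis `i` is the freshly inserted hyperplane). -/
def insIdx {d : ℕ} (i : Fin d) (k : ℕ) (x : Fin d → ℕ) : Fin d → ℕ :=
  fun j => if j = i then (if x i < k then x i else x i + 1) else x j

/-- `InsertsTo i A B`: the array `B` is obtained from the array `A` by a single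
`x_i`-insertion, i.e. by inserting one `(d-1)`-dimensional hyperplane (with arbitrary
entries) orthogonal to the `x_i`-axis. -/
def InsertsTo {q d : ℕ} (i : Fin d) (A B : Arr q d) : Prop :=
  (∀ j, B.size j = if j = i then A.size j + 1 else A.size j) ∧
  ∃ k ≤ A.size i, ∀ (x : Fin d → ℕ) (hx : ∀ j, x j < A.size j)
    (hx' : ∀ j, insIdx i k x j < B.size j),
    A.val x hx = B.val (insIdx i k x) hx'

/-- `DeletesTo i A B`: the array `B` is obtained from `A` by a single `x_i`-deletion,
the inverse operation of an `x_i`-insertion. -/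
def DeletesTo {q d : ℕ} (i : Fin d) (A B : Arr q d) : Prop :=
  InsertsTo i B A

/-- `Steps R t A B`: the array `B` is obtained from the array `A` by performing, for each
axis `i`, exactly `t i` operations of type `R i` (in some order). -/
inductive Steps {q d : ℕ} (R : Fin d → Arr q d → Arr q d → Prop) :
    (Fin d → ℕ) → Arr q d → Arr q d → Prop
  | refl (A : Arr q d) : Steps R 0 A A
  | step {t : Fin d → ℕ} {A B C : Arr q d} (i : Fin d) :
      R i A B → Steps R t B C → Steps R (t + Pi.single i 1) A C

/-- The deletion ball `D_t(X)`: all arrays obtainable from `X` by a `t`-deletion,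
i.e. by `t i` `x_i`-deletions for each axis `i`. -/
def delBall {q d : ℕ} (t : Fin d → ℕ) (X : Arr q d) : Set (Arr q d) :=
  {Y | Steps DeletesTo t X Y}

/-- The insertion ball `I_t(X)`: all arrays obtainable from `X` by a `t`-insertion,
i.e. by `t i` `x_i`-insertions for each axis `i`. -/
def insBall {q d : ℕ} (t : Fin d → ℕ) (X : Arr q d) : Set (Arr q d) :=
  {Y | Steps InsertsTo t X Y}

/-- The insertion-deletion ball `ID_t(X)`: all arrays obtainable from `X` by a
`t^del`-deletion followed by a `t^ins`-insertion, for some decomposition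
`t = t^ins + t^del`. -/
def insDelBall {q d : ℕ} (t : Fin d → ℕ) (X : Arr q d) : Set (Arr q d) :=
  {Z | ∃ tins tdel : Fin d → ℕ, tins + tdel = t ∧
    ∃ W ∈ delBall tdel X, Z ∈ insBall tins W}

/-- `Σ_q^{n^{⊗d}}`: the set of `q`-ary `d`-dimensional arrays of cubic size `n × ⋯ × n`. -/
def cube (q d n : ℕ) : Set (Arr q d) := {A | A.size = fun _ => n}

/-- A code `C` is a `t`-deletion-correcting code if the deletion balls `D_t(X)`, `X ∈ C`,
are pairwise disjoint. -/
def IsDelCode {q d : ℕ} (t : Fin d → ℕ) (C : Set (Arr q d)) : Prop :=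
  ∀ X ∈ C, ∀ Y ∈ C, X ≠ Y → delBall t X ∩ delBall t Y = ∅

/-- A code `C` is a `t`-insertion-correcting code if the insertion balls `I_t(X)`,
`X ∈ C`, are pairwise disjoint. -/
def IsInsCode {q d : ℕ} (t : Fin d → ℕ) (C : Set (Arr q d)) : Prop :=
  ∀ X ∈ C, ∀ Y ∈ C, X ≠ Y → insBall t X ∩ insBall t Y = ∅

/-- A code `C` is a `t`-insdel-correcting code if the insertion-deletion balls `ID_t(X)`,
`X ∈ C`, are pairwise disjoint. -/
def IsInsDelCode {q d : ℕ} (t : Fin d → ℕ) (C : Set (Arr q d)) : Prop :=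
  ∀ X ∈ C, ∀ Y ∈ C, X ≠ Y → insDelBall t X ∩ insDelBall t Y = ∅

section AuxPart1
variable {q d : ℕ}

theorem Arr.ext₁ {A B : Arr q d} (hs : A.size = B.size)
    (hv : ∀ x hxA hxB, A.val x hxA = B.val x hxB) : A = B := by
  obtain ⟨sa, va⟩ := A
  obtain ⟨sb, vb⟩ := B
  dsimp at hs
  subst hs
  have : va = vb := by
    funext x hx
    exact hv x hx hx
  rw [this]

theorem val_congr (A : Arr q d) {x y : Fin d → ℕ} (h : x = y)
    (hx : ∀ i, x i < A.size i) (hy : ∀ i, y i < A.size i) :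
    A.val x hx = A.val y hy := by subst h; rfl

def skip (p y : ℕ) : ℕ := if y < p then y else y + 1

theorem skip_lt_skip {p y y' : ℕ} (h : y < y') : skip p y < skip p y' := by
  simp only [skip]; split_ifs <;> omega

theorem skip_le (p y : ℕ) : skip p y ≤ y + 1 := by
  simp only [skip]; split_ifs <;> omega

theorem le_skip (p y : ℕ) : y ≤ skip p y := by
  simp only [skip]; split_ifs <;> omega

theorem skip_ne (p y : ℕ) : skip p y ≠ p := by
  simp only [skip]; split_ifs <;> omega

/-- `Y` is the subarray of `X` selected, along each axis `i`, by the strictly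
monotone selection map `u i`, which misses exactly `c i` positions. -/
def SelRel (c : Fin d → ℕ) (u : Fin d → ℕ → ℕ) (X Y : Arr q d) : Prop :=
  (∀ i, X.size i = Y.size i + c i) ∧
  (∀ i y y', y < y' → y' < Y.size i → u i y < u i y') ∧
  (∀ i y, y < Y.size i → u i y < X.size i) ∧
  (∀ x hx hx', Y.val x hx = X.val (fun i => u i (x i)) hx')

theorem selrel_inj {c : Fin d → ℕ} {u} {X Y : Arr q d} (hs : SelRel c u X Y)
    {i : Fin d} {y y' : ℕ} (hy : y < Y.size i) (hy' : y' < Y.size i)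
    (h : u i y = u i y') : y = y' := by
  rcases Nat.lt_trichotomy y y' with hlt | he | hlt
  · have := hs.2.1 i y y' hlt hy'; omega
  · exact he
  · have := hs.2.1 i y' y hlt hy; omega

/-- delete, for each axis in `T`, the hyperplane at position `k j`. -/
def mdel (A : Arr q d) (k : Fin d → ℕ) (T : Finset (Fin d)) : Arr q d where
  size j := if j ∈ T then A.size j - 1 else A.size j
  val x hx := A.val (fun j => if j ∈ T then skip (k j) (x j) else x j)
    (by
      intro j
      have h := hx j
      by_cases hj : j ∈ T
      · simp only [hj, if_true] at h ⊢
        have := skip_le (k j) (x j)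
        omega
      · simpa [hj] using h)

theorem del_mdel (A : Arr q d) (i : Fin d) (k : Fin d → ℕ) (hk : k i < A.size i) :
    DeletesTo i A (mdel A k {i}) := by
  refine ⟨fun j => ?_, k i, ?_, fun x hx hx' => ?_⟩
  · by_cases hj : j = i
    · simp [mdel, hj]
      omega
    · simp [mdel, hj]
  · simp [mdel]
    omega
  · refine val_congr A ?_ _ _
    funext j
    by_cases hj : j = i
    · simp [hj, insIdx, skip]
    · simp [insIdx, hj]

theorem mdel_mdel (A : Arr q d) (k : Fin d → ℕ) {a : Fin d} {T : Finset (Fin d)} (ha : a ∉ T) :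
    mdel (mdel A k {a}) k T = mdel A k (insert a T) := by
  apply Arr.ext₁
  · funext j
    by_cases hjT : j ∈ T
    · have hja : j ≠ a := fun h => ha (h ▸ hjT)
      simp [mdel, hjT, hja]
    · by_cases hja : j = a
      · simp [mdel, hjT, hja, ha]
      · simp [mdel, hjT, hja]
  · intro x h h'
    refine val_congr A ?_ _ _
    funext j
    by_cases hjT : j ∈ T
    · have hja : j ≠ a := fun h => ha (h ▸ hjT)
      simp [hjT, hja, Finset.mem_insert]
    · by_cases hja : j = a
      · subst hja
        simp [hjT, Finset.mem_insert]
      · simp [hjT, hja, Finset.mem_insert]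

theorem steps_trans {R : Fin d → Arr q d → Arr q d → Prop} {s : Fin d → ℕ} {A B : Arr q d}
    (h1 : Steps R s A B) :
    ∀ {s' : Fin d → ℕ} {C : Arr q d}, Steps R s' B C → Steps R (s + s') A C := by
  induction h1 with
  | refl A => intro s' C h2; simpa using h2
  | step i hAB _ ih =>
      intro s' C h2
      have h3 := Steps.step i hAB (ih h2)
      rw [add_right_comm]
      exact h3

theorem sum_single_univ (d : ℕ) :
    (∑ i : Fin d, Pi.single i (1 : ℕ)) = fun _ => 1 := by
  funext j
  rw [Finset.sum_apply]
  simp [Pi.single_apply]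

theorem steps_mdel (k : Fin d → ℕ) (T : Finset (Fin d)) :
    ∀ (A : Arr q d), (∀ i ∈ T, k i < A.size i) →
      Steps DeletesTo (∑ i ∈ T, Pi.single i 1) A (mdel A k T) := by
  induction T using Finset.induction_on with
  | empty =>
      intro A _
      have hAe : mdel A k ∅ = A := by
        apply Arr.ext₁
        · funext j; simp [mdel]
        · intro x h h'
          exact val_congr A (funext fun j => by simp) _ _
      rw [Finset.sum_empty, hAe]
      exact Steps.refl A
  | @insert a T ha ih =>
      intro A hk
      have h1 : DeletesTo a A (mdel A k {a}) :=
        del_mdel A a k (hk a (Finset.mem_insert_self a T))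
      have h2 := ih (mdel A k {a}) (fun i hi => by
        have hne : i ≠ a := fun h => ha (h ▸ hi)
        simpa [mdel, hne] using hk i (Finset.mem_insert_of_mem hi))
      rw [mdel_mdel A k ha] at h2
      have h3 := Steps.step a h1 h2
      rw [Finset.sum_insert ha, add_comm]
      exact h3

theorem rep {c : Fin d → ℕ} {X Y : Arr q d} (h : Steps DeletesTo c X Y) :
    ∃ u, SelRel c u X Y := by
  induction h with
  | refl A =>
      exact ⟨fun _ y => y, fun i => by simp, fun i y y' h _ => h, fun i y hy => hy,
        fun x hx hx' => val_congr A rfl hx hx'⟩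
  | @step t A' B' C' i hXB hBY ih =>
      obtain ⟨u, hsz, hmono, hbd, hval⟩ := ih
      obtain ⟨hs2, k, hk, hv2⟩ := hXB
      refine ⟨fun j y => if j = i then skip k (u j y) else u j y, ?_, ?_, ?_, ?_⟩
      · intro j
        have e1 := hs2 j
        have e2 := hsz j
        by_cases hj : j = i
        · subst hj
          simp [Pi.single_apply] at e1 ⊢
          omega
        · simp [hj, Pi.single_apply] at e1 ⊢
          omega
      · intro j y y' hyy hy'
        by_cases hj : j = i
        · subst hj
          simp only [if_pos rfl]
          exact skip_lt_skip (hmono _ y y' hyy hy')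
        · simp only [if_neg hj]
          exact hmono j y y' hyy hy'
      · intro j y hy
        have e1 := hs2 j
        have h1 := hbd j y hy
        by_cases hj : j = i
        · subst hj
          simp at e1 ⊢
          have := skip_le k (u j y)
          omega
        · simp only [if_neg hj] at e1 ⊢
          omega
      · intro x hx hx'
        have hbB : ∀ j, u j (x j) < B'.size j := fun j => hbd j (x j) (hx j)
        have hb2 : ∀ j, insIdx i k (fun j => u j (x j)) j < A'.size j := by
          intro j
          have e1 := hs2 j
          have h1 := hbB j
          by_cases hj : j = i
          · subst hj
            simp [insIdx] at e1 ⊢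
            split_ifs <;> omega
          · simp only [insIdx, if_neg hj] at e1 ⊢
            omega
        rw [hval x hx hbB, hv2 (fun j => u j (x j)) hbB hb2]
        exact val_congr A' (funext fun j => by
          by_cases hj : j = i
          · simp [hj, insIdx, skip]
          · simp [insIdx, hj]) _ hx'

theorem gap_exists {m N : ℕ} (u : ℕ → ℕ) (hlt : m < N) :
    ∃ k, k < N ∧ ∀ y, y < m → u y ≠ k := by
  by_contra hcon
  push_neg at hcon
  have hsub : Finset.range N ⊆ (Finset.range m).image u := by
    intro k hkN
    obtain ⟨y, hy, he⟩ := hcon k (Finset.mem_range.mp hkN)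
    exact Finset.mem_image.mpr ⟨y, Finset.mem_range.mpr hy, he⟩
  have := Finset.card_le_card hsub
  have h2 := Finset.card_image_le (f := u) (s := Finset.range m)
  simp [Finset.card_range] at this h2
  omega

end AuxPart1

section AuxPart2
variable {q d : ℕ}

theorem factor {c : Fin d → ℕ} {u : Fin d → ℕ → ℕ} {X Y : Arr q d} (hs : SelRel c u X Y)
    (i : Fin d) {k : ℕ} (hk : k < X.size i) (hgap : ∀ y, y < Y.size i → u i y ≠ k)
    (hc : 1 ≤ c i) :
    SelRel (fun j => if j = i then c j - 1 else c j)
      (fun j y => if j = i then (if u j y < k then u j y else u j y - 1) else u j y)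
      (mdel X (fun _ => k) {i}) Y := by
  obtain ⟨hsz, hmono, hbd, hval⟩ := hs
  refine ⟨?_, ?_, ?_, ?_⟩
  · intro j
    have e1 := hsz j
    by_cases hj : j = i
    · subst hj
      simp [mdel]
      omega
    · simp [mdel, hj]
      omega
  · intro j y y' hyy hy'
    by_cases hj : j = i
    · subst hj
      simp only [if_pos rfl]
      have h1 := hmono j y y' hyy hy'
      have h2 := hgap y (by omega)
      have h3 := hgap y' hy'
      split_ifs <;> omega
    · simp only [if_neg hj]
      exact hmono j y y' hyy hy'
  · intro j y hy
    have h1 := hbd j y hy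
    by_cases hj : j = i
    · subst hj
      have h2 := hgap y hy
      simp [mdel]
      split_ifs <;> omega
    · simp [mdel, hj]
      omega
  · intro x hx hx'
    have hb : ∀ j, u j (x j) < X.size j := fun j => hbd j (x j) (hx j)
    rw [hval x hx hb]
    refine val_congr X ?_ hb _
    funext j
    by_cases hj : j = i
    · subst hj
      have h1 := hgap (x j) (hx j)
      simp only [Finset.mem_singleton, if_pos rfl, skip]
      split_ifs <;> omega
    · simp [hj]

theorem selrel_eq {c : Fin d → ℕ} {u} {X Y : Arr q d} (hs : SelRel c u X Y)
    (hc : ∀ i, c i = 0) : X = Y := by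
  obtain ⟨hsz, hmono, hbd, hval⟩ := hs
  have hid : ∀ i y, y < Y.size i → u i y = y := by
    intro i
    have hlow : ∀ y, y < Y.size i → y ≤ u i y := by
      intro y
      induction y with
      | zero => intro _; exact Nat.zero_le _
      | succ n ihn =>
          intro hy
          have h1 := hmono i n (n + 1) (Nat.lt_succ_self n) hy
          have h2 := ihn (by omega)
          omega
    have hgap2 : ∀ y' y, y ≤ y' → y' < Y.size i → u i y + (y' - y) ≤ u i y' := by
      intro y'
      induction y' with
      | zero => intro y h1 _; have : y = 0 := by omega
                subst this; omega
      | succ n ihn =>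
          intro y h1 h2
          rcases Nat.lt_or_ge y (n + 1) with h | h
          · have h3 := ihn y (by omega) (by omega)
            have h4 := hmono i n (n + 1) (Nat.lt_succ_self n) h2
            omega
          · have : y = n + 1 := by omega
            subst this
            omega
    intro y hy
    have h1 := hlow y hy
    by_cases hY : Y.size i = 0
    · omega
    · have h2 := hgap2 (Y.size i - 1) y (by omega) (by omega)
      have h3 := hbd i (Y.size i - 1) (by omega)
      have h4 := hsz i
      have h5 := hc i
      omega
  refine Arr.ext₁ (funext fun i => by have := hsz i; have := hc i; omega) ?_
  intro x hA hB
  have hb : ∀ j, u j (x j) < X.size j := fun j => hbd j (x j) (hB j)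
  rw [hval x hB hb]
  exact val_congr X (funext fun j => (hid j (x j) (hB j)).symm) hA hb

theorem selrel_steps_aux :
    ∀ N : ℕ, ∀ c : Fin d → ℕ, (∑ i, c i) = N →
    ∀ (u : Fin d → ℕ → ℕ) (X Y : Arr q d), SelRel c u X Y → Steps DeletesTo c X Y := by
  intro N
  induction N using Nat.strong_induction_on with
  | _ N ih =>
    intro c hc u X Y hs
    by_cases h0 : ∀ i, c i = 0
    · have hXY := selrel_eq hs h0
      have hc0 : c = 0 := funext fun i => h0 i
      rw [hc0, hXY]
      exact Steps.refl Y
    · push_neg at h0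
      obtain ⟨i, hi⟩ := h0
      have hYX : Y.size i < X.size i := by have := hs.1 i; omega
      obtain ⟨k, hk, hgap⟩ := gap_exists (u i) hYX
      have hf := factor hs i hk hgap (by omega)
      have hsum : (∑ j, (fun j => if j = i then c j - 1 else c j) j) < N := by
        rw [← hc]
        refine Finset.sum_lt_sum (fun j _ => ?_) ⟨i, Finset.mem_univ i, ?_⟩
        · by_cases hj : j = i <;> simp [hj] <;> omega
        · simp; omega
      have hst := ih _ hsum _ rfl _ _ _ hf
      have hstep := Steps.step i (del_mdel X i (fun _ => k) hk) hst
      have hceq : (fun j => if j = i then c j - 1 else c j) + Pi.single i 1 = c := by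
        funext j
        by_cases hj : j = i
        · subst hj; simp [Pi.single_apply]; omega
        · simp [hj, Pi.single_apply]
      rw [hceq] at hstep
      exact hstep

theorem selrel_steps {c : Fin d → ℕ} {u} {X Y : Arr q d} (hs : SelRel c u X Y) :
    Steps DeletesTo c X Y :=
  selrel_steps_aux _ c rfl u X Y hs

end AuxPart2

section AuxPart3
variable {q d : ℕ}

theorem diamondStep {i : Fin d} {X A₁ B : Arr q d} {r : Fin d → ℕ} {v : Fin d → ℕ → ℕ}
    (h : DeletesTo i X A₁) (hs : SelRel r v X B) (hB : 1 ≤ B.size i) :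
    ∃ C v', DeletesTo i B C ∧ SelRel r v' A₁ C := by
  obtain ⟨hsz, k, hk, hval⟩ := h
  obtain ⟨hsz2, hmono, hbd, hval2⟩ := hs
  by_cases hex : ∃ z, z < B.size i ∧ v i z = k
  · obtain ⟨z, hz, hvz⟩ := hex
    refine ⟨mdel B (fun _ => z) {i},
      fun j y => if j = i then (if y < z then v j y else v j (y + 1) - 1) else v j y,
      del_mdel B i _ hz, ?_, ?_, ?_, ?_⟩
    · intro j
      have e1 := hsz j
      have e2 := hsz2 j
      by_cases hj : j = i
      · subst hj; simp at e1; simp [mdel]; omega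
      · simp [hj] at e1; simp [mdel, hj]; omega
    · intro j y y' hyy hy'
      dsimp only
      by_cases hj : j = i
      · subst hj
        simp [mdel] at hy'
        rw [if_pos rfl, if_pos rfl]
        by_cases h1 : y < z
        · by_cases h2 : y' < z
          · rw [if_pos h1, if_pos h2]
            exact hmono j y y' hyy (by omega)
          · rw [if_pos h1, if_neg h2]
            have ha := hmono j y z h1 (by omega)
            have hb2 := hmono j z (y' + 1) (by omega) (by omega)
            omega
        · by_cases h2 : y' < z
          · exact absurd h2 (by omega)
          · rw [if_neg h1, if_neg h2]
            have ha := hmono j (y + 1) (y' + 1) (by omega) (by omega)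
            have hb2 := hmono j z (y + 1) (by omega) (by omega)
            omega
      · rw [if_neg hj, if_neg hj]
        simp [mdel, hj] at hy'
        exact hmono j y y' hyy hy'
    · intro j y hy
      dsimp only
      have e1 := hsz j
      by_cases hj : j = i
      · subst hj
        simp at e1
        simp [mdel] at hy
        rw [if_pos rfl]
        by_cases h1 : y < z
        · rw [if_pos h1]
          have h2 := hmono j y z h1 hz
          omega
        · rw [if_neg h1]
          have h2 := hmono j z (y + 1) (by omega) (by omega)
          have h3 := hbd j (y + 1) (by omega)
          omega
      · rw [if_neg hj]
        simp [hj] at e1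
        simp [mdel, hj] at hy
        have := hbd j y hy
        omega
    · intro x hx hx'
      have hbC : ∀ j, (if j ∈ ({i} : Finset (Fin d)) then skip z (x j) else x j) < B.size j := by
        intro j
        have h1 := hx j
        by_cases hj : j = i
        · subst hj
          simp [mdel] at h1
          rw [if_pos (Finset.mem_singleton_self j)]
          have := skip_le z (x j)
          omega
        · rw [if_neg (by simp [hj])]
          simpa [mdel, hj] using h1
      have hbX : ∀ j, v j (if j ∈ ({i} : Finset (Fin d)) then skip z (x j) else x j) < X.size j :=
        fun j => hbd j _ (hbC j)
      have e1 : (mdel B (fun _ => z) {i}).val x hx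
          = X.val (fun j => v j (if j ∈ ({i} : Finset (Fin d)) then skip z (x j) else x j)) hbX :=
        hval2 _ _ hbX
      rw [e1]
      have efun : (fun j => v j (if j ∈ ({i} : Finset (Fin d)) then skip z (x j) else x j))
          = insIdx i k (fun j => if j = i then (if x j < z then v j (x j) else v j (x j + 1) - 1) else v j (x j)) := by
        funext j
        by_cases hj : j = i
        · subst hj
          have h2 : x j < B.size j - 1 := by have := hx j; simpa [mdel] using this
          rw [if_pos (Finset.mem_singleton_self j)]
          simp only [insIdx, if_true]
          simp only [skip]
          by_cases hxz : x j < z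
          · have h1 := hmono j (x j) z hxz hz
            rw [if_pos hxz, if_pos hxz, if_pos (by omega)]
          · have h1 := hmono j z (x j + 1) (by omega) (by omega)
            rw [if_neg hxz, if_neg hxz, if_neg (by omega)]
            omega
        · simp [insIdx, hj]
      have hbX2 : ∀ j, insIdx i k (fun j => if j = i then (if x j < z then v j (x j) else v j (x j + 1) - 1) else v j (x j)) j < X.size j := by
        intro j
        rw [← efun]
        exact hbX j
      exact (val_congr X efun hbX hbX2).trans (hval _ hx' hbX2).symm
  · push_neg at hex
    have hz0 : (0 : ℕ) < B.size i := by omega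
    refine ⟨mdel B (fun _ => 0) {i},
      fun j y => if j = i then (if v j (y + 1) < k then v j (y + 1) else v j (y + 1) - 1) else v j y,
      del_mdel B i _ hz0, ?_, ?_, ?_, ?_⟩
    · intro j
      have e1 := hsz j
      have e2 := hsz2 j
      by_cases hj : j = i
      · subst hj; simp at e1; simp [mdel]; omega
      · simp [hj] at e1; simp [mdel, hj]; omega
    · intro j y y' hyy hy'
      dsimp only
      by_cases hj : j = i
      · subst hj
        simp [mdel] at hy'
        rw [if_pos rfl, if_pos rfl]
        have ha := hmono j (y + 1) (y' + 1) (by omega) (by omega)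
        have hb1 := hex (y + 1) (by omega)
        have hb2 := hex (y' + 1) (by omega)
        split_ifs <;> omega
      · rw [if_neg hj, if_neg hj]
        simp [mdel, hj] at hy'
        exact hmono j y y' hyy hy'
    · intro j y hy
      dsimp only
      have e1 := hsz j
      by_cases hj : j = i
      · subst hj
        simp at e1
        simp [mdel] at hy
        rw [if_pos rfl]
        have h2 := hbd j (y + 1) (by omega)
        have h3 := hex (y + 1) (by omega)
        split_ifs <;> omega
      · rw [if_neg hj]
        simp [hj] at e1
        simp [mdel, hj] at hy
        have := hbd j y hy
        omega
    · intro x hx hx'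
      have hbC : ∀ j, (if j ∈ ({i} : Finset (Fin d)) then skip 0 (x j) else x j) < B.size j := by
        intro j
        have h1 := hx j
        by_cases hj : j = i
        · subst hj
          simp [mdel] at h1
          rw [if_pos (Finset.mem_singleton_self j)]
          have := skip_le 0 (x j)
          omega
        · rw [if_neg (by simp [hj])]
          simpa [mdel, hj] using h1
      have hbX : ∀ j, v j (if j ∈ ({i} : Finset (Fin d)) then skip 0 (x j) else x j) < X.size j :=
        fun j => hbd j _ (hbC j)
      have e1 : (mdel B (fun _ => 0) {i}).val x hx
          = X.val (fun j => v j (if j ∈ ({i} : Finset (Fin d)) then skip 0 (x j) else x j)) hbX :=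
        hval2 _ _ hbX
      rw [e1]
      have efun : (fun j => v j (if j ∈ ({i} : Finset (Fin d)) then skip 0 (x j) else x j))
          = insIdx i k (fun j => if j = i then (if v j (x j + 1) < k then v j (x j + 1) else v j (x j + 1) - 1) else v j (x j)) := by
        funext j
        by_cases hj : j = i
        · subst hj
          have h2 : x j < B.size j - 1 := by have := hx j; simpa [mdel] using this
          have h3 := hex (x j + 1) (by omega)
          rw [if_pos (Finset.mem_singleton_self j)]
          simp only [insIdx, if_true]
          simp only [skip]
          rw [if_neg (by omega : ¬ x j < 0)]
          by_cases hvk : v j (x j + 1) < k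
          · rw [if_pos hvk, if_pos hvk]
          · rw [if_neg hvk, if_neg (by omega)]
            omega
        · simp [insIdx, hj]
      have hbX2 : ∀ j, insIdx i k (fun j => if j = i then (if v j (x j + 1) < k then v j (x j + 1) else v j (x j + 1) - 1) else v j (x j)) j < X.size j := by
        intro j
        rw [← efun]
        exact hbX j
      exact (val_congr X efun hbX hbX2).trans (hval _ hx' hbX2).symm

theorem diamond {s : Fin d → ℕ} {X A : Arr q d} (h : Steps DeletesTo s X A) :
    ∀ {B : Arr q d} {r : Fin d → ℕ} {v : Fin d → ℕ → ℕ}, SelRel r v X B →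
    (∀ j, s j ≤ B.size j) →
    ∃ C v', Steps DeletesTo s B C ∧ SelRel r v' A C := by
  induction h with
  | refl X => exact fun hs _ => ⟨_, _, Steps.refl _, hs⟩
  | @step t X' A₁ A'' i h1 h2 ih =>
      intro B r v hs hsz
      have hB : 1 ≤ B.size i := by
        have := hsz i
        simp [Pi.single_apply] at this
        omega
      obtain ⟨C₁, v₁, hdel, hs₁⟩ := diamondStep h1 hs hB
      have hC₁sz : ∀ j, t j ≤ C₁.size j := by
        intro j
        have ha := hs₁.1 j
        have hb2 := hs.1 j
        have hc2 := h1.1 j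
        have hd2 := hsz j
        by_cases hj : j = i
        · subst hj; simp at hc2; simp [Pi.single_apply] at hd2; omega
        · simp [hj] at hc2; simp [hj, Pi.single_apply] at hd2; omega
      obtain ⟨C, v', hsteps, hrel⟩ := ih hs₁ hC₁sz
      exact ⟨C, v', Steps.step i hdel hsteps, hrel⟩

end AuxPart3

section AuxPart4
variable {q d : ℕ}

/-- insert a hyperplane at position `p` along axis `i`, with content `cf`. -/
def hins (A : Arr q d) (i : Fin d) (p : ℕ) (cf : (Fin d → ℕ) → Fin q) : Arr q d where
  size j := if j = i then A.size j + 1 else A.size j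
  val x _ :=
    if x i = p then cf x
    else if h : ∀ j, (if j = i then (if x j < p then x j else x j - 1) else x j) < A.size j
      then A.val (fun j => if j = i then (if x j < p then x j else x j - 1) else x j) h
      else cf x

theorem hins_size (A : Arr q d) (i : Fin d) (p : ℕ) (cf) (j : Fin d) :
    (hins A i p cf).size j = if j = i then A.size j + 1 else A.size j := rfl

theorem hins_val_eqp (A : Arr q d) (i : Fin d) (p : ℕ) (cf) (x : Fin d → ℕ)
    (hx : ∀ j, x j < (hins A i p cf).size j) (hxi : x i = p) :
    (hins A i p cf).val x hx = cf x := by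
  show (if x i = p then _ else _) = _
  rw [if_pos hxi]

theorem hins_val_nep (A : Arr q d) (i : Fin d) (p : ℕ) (cf) (x : Fin d → ℕ)
    (hx : ∀ j, x j < (hins A i p cf).size j) (hxi : x i ≠ p) (z : Fin d → ℕ)
    (hz : ∀ j, z j < A.size j)
    (hdel : ∀ j, (if j = i then (if x j < p then x j else x j - 1) else x j) = z j) :
    (hins A i p cf).val x hx = A.val z hz := by
  show (if x i = p then _ else _) = _
  rw [if_neg hxi, dif_pos (fun j => by rw [hdel j]; exact hz j)]
  exact val_congr A (funext hdel) _ hz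

/-- Given `Y ⊆ X` via `u` with `c i ≥ 1` gaps and a chosen gap `k i` per axis, produce a
middle array `W` = `Y` plus one extra hyperplane per axis (taken from `X`). -/
theorem extend_sel (hq0 : 0 < q) {c : Fin d → ℕ} {u : Fin d → ℕ → ℕ} {X Y : Arr q d}
    (hs : SelRel c u X Y) (k : Fin d → ℕ) (hk : ∀ i, k i < X.size i)
    (hgap : ∀ i y, y < Y.size i → u i y ≠ k i) (hc : ∀ i, 1 ≤ c i) :
    ∃ (W : Arr q d) (w v : Fin d → ℕ → ℕ), (∀ i, W.size i = Y.size i + 1) ∧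
      SelRel (fun i => c i - 1) w X W ∧ SelRel (fun _ => 1) v W Y := by
  obtain ⟨hsz, hmono, hbd, hval⟩ := hs
  have hzc : ∀ i : Fin d, ∃ zi, zi ≤ Y.size i ∧ (∀ y, y < zi → u i y < k i) ∧
      (∀ y, zi ≤ y → y < Y.size i → k i < u i y) := by
    intro i
    have hexf : ∃ y, Y.size i ≤ y ∨ k i < u i y := ⟨Y.size i, Or.inl le_rfl⟩
    refine ⟨Nat.find hexf, Nat.find_min' hexf (Or.inl le_rfl), ?_, ?_⟩
    · intro y hy
      have h1 := Nat.find_min hexf hy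
      push_neg at h1
      have h2 := hgap i y (by omega)
      omega
    · intro y hzy hy
      have h1 := Nat.find_spec hexf
      rcases h1 with h1 | h1
      · omega
      · rcases Nat.eq_or_lt_of_le hzy with h | h
        · rw [← h]; exact h1
        · exact lt_trans h1 (hmono i (Nat.find hexf) y h hy)
  choose z hzle hlow hhigh using hzc
  have hwbd : ∀ i y, y < Y.size i + 1 →
      (if y < z i then u i y else if y = z i then k i else u i (y - 1)) < X.size i := by
    intro i y hy
    split_ifs with h1 h2
    · exact hbd i y (by have := hzle i; omega)
    · exact hk i
    · exact hbd i (y - 1) (by omega)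
  have hwmono : ∀ i y y', y < y' → y' < Y.size i + 1 →
      (if y < z i then u i y else if y = z i then k i else u i (y - 1)) <
      (if y' < z i then u i y' else if y' = z i then k i else u i (y' - 1)) := by
    intro i y y' hyy hy'
    have hzl := hzle i
    rcases Nat.lt_trichotomy y (z i) with h1 | h1 | h1
    · rw [if_pos h1]
      rcases Nat.lt_trichotomy y' (z i) with h2 | h2 | h2
      · rw [if_pos h2]
        exact hmono i y y' hyy (by omega)
      · rw [if_neg (by omega), if_pos h2]
        exact hlow i y h1
      · rw [if_neg (by omega), if_neg (by omega)]
        have ha := hlow i y h1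
        have hb2 := hhigh i (y' - 1) (by omega) (by omega)
        omega
    · rw [if_neg (by omega), if_pos h1, if_neg (by omega), if_neg (by omega)]
      exact hhigh i (y' - 1) (by omega) (by omega)
    · rw [if_neg (by omega), if_neg (by omega), if_neg (by omega), if_neg (by omega)]
      exact hmono i (y - 1) (y' - 1) (by omega) (by omega)
  refine ⟨⟨fun i => Y.size i + 1,
      fun x _ => if h : ∀ j, (if x j < z j then u j (x j) else if x j = z j then k j else u j (x j - 1)) < X.size j
        then X.val (fun j => if x j < z j then u j (x j) else if x j = z j then k j else u j (x j - 1)) h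
        else ⟨0, hq0⟩⟩,
    fun i y => if y < z i then u i y else if y = z i then k i else u i (y - 1),
    fun i => skip (z i), fun i => rfl, ⟨?_, ?_, ?_, ?_⟩, ⟨?_, ?_, ?_, ?_⟩⟩
  · intro i
    have h1 := hsz i
    have h2 := hc i
    show X.size i = Y.size i + 1 + (c i - 1)
    omega
  · intro i y y' h1 h2
    dsimp only
    exact hwmono i y y' h1 h2
  · intro i y h1
    dsimp only
    exact hwbd i y h1
  · intro x hx hx'
    show (if h : ∀ j, (if x j < z j then u j (x j) else if x j = z j then k j else u j (x j - 1)) < X.size j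
        then X.val _ h else ⟨0, hq0⟩) = _
    rw [dif_pos (fun j => hwbd j (x j) (hx j))]
  · intro i
    rfl
  · intro i y y' h1 _
    exact skip_lt_skip h1
  · intro i y h1
    have := skip_le (z i) y
    show skip (z i) y < Y.size i + 1
    omega
  · intro x hx hx'
    have hws : ∀ j, (if skip (z j) (x j) < z j then u j (skip (z j) (x j))
        else if skip (z j) (x j) = z j then k j else u j (skip (z j) (x j) - 1)) = u j (x j) := by
      intro j
      simp only [skip]
      by_cases h1 : x j < z j
      · simp only [if_pos h1]
      · simp only [if_neg h1, if_neg (show ¬ x j + 1 < z j by omega), if_neg (show x j + 1 ≠ z j by omega), Nat.add_sub_cancel]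
    have hb : ∀ j, u j (x j) < X.size j := fun j => hbd j (x j) (hx j)
    have hb2 : ∀ j, (if skip (z j) (x j) < z j then u j (skip (z j) (x j))
        else if skip (z j) (x j) = z j then k j else u j (skip (z j) (x j) - 1)) < X.size j :=
      fun j => by rw [hws j]; exact hb j
    rw [hval x hx hb]
    show _ = (if h : ∀ j, (if skip (z j) (x j) < z j then u j (skip (z j) (x j))
        else if skip (z j) (x j) = z j then k j else u j (skip (z j) (x j) - 1)) < X.size j
        then X.val _ h else ⟨0, hq0⟩)
    rw [dif_pos hb2]
    exact val_congr X (funext fun j => (hws j).symm) hb hb2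

/-- Remove one chosen gap per axis: yields `M` with `X → M` one deletion per axis
and `M ⊇ Y` with one fewer gap per axis. -/
theorem shrink_all {c : Fin d → ℕ} {u : Fin d → ℕ → ℕ} {X Y : Arr q d} (hs : SelRel c u X Y)
    (k : Fin d → ℕ) (hk : ∀ i, k i < X.size i) (hgap : ∀ i y, y < Y.size i → u i y ≠ k i)
    (hc : ∀ i, 1 ≤ c i) :
    SelRel (fun i => c i - 1) (fun i y => if u i y < k i then u i y else u i y - 1)
      (mdel X k Finset.univ) Y ∧
    Steps DeletesTo (fun _ => 1) X (mdel X k Finset.univ) := by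
  obtain ⟨hsz, hmono, hbd, hval⟩ := hs
  constructor
  · refine ⟨?_, ?_, ?_, ?_⟩
    · intro i
      have h1 := hsz i
      have h2 := hk i
      have h3 := hc i
      simp [mdel]
      omega
    · intro i y y' h1 h2
      dsimp only
      have ha := hmono i y y' h1 h2
      have hb1 := hgap i y (by omega)
      have hb2 := hgap i y' h2
      split_ifs <;> omega
    · intro i y hy
      have h1 := hbd i y hy
      have h2 := hgap i y hy
      have h3 := hk i
      simp [mdel]
      split_ifs <;> omega
    · intro x hx hx'
      have hb : ∀ j, u j (x j) < X.size j := fun j => hbd j (x j) (hx j)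
      rw [hval x hx hb]
      refine val_congr X ?_ hb _
      funext j
      dsimp only
      have h1 := hgap j (x j) (hx j)
      rw [if_pos (Finset.mem_univ j)]
      simp only [skip]
      split_ifs <;> omega
  · have h := steps_mdel k Finset.univ X (fun i _ => hk i)
    rwa [sum_single_univ] at h

end AuxPart4

section AuxPart5
variable {q d : ℕ}

attribute [local instance] Classical.propDecidable

theorem pushout (hq0 : 0 < q) :
    ∀ N : ℕ, ∀ b : Fin d → ℕ, (∑ j, b j) = N →
    ∀ (B C : Arr q d) (v : Fin d → ℕ → ℕ), SelRel b v B C →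
    ∀ (A : Arr q d) (a : Fin d → ℕ) (u : Fin d → ℕ → ℕ), SelRel a u A C →
    ∃ (X : Arr q d) (w₁ w₂ : Fin d → ℕ → ℕ), SelRel b w₁ X A ∧ SelRel a w₂ X B := by
  intro N
  induction N using Nat.strong_induction_on with
  | _ N ih =>
    intro b hb B C v hv A a u hu
    by_cases h0 : ∀ i, b i = 0
    · have hBC := selrel_eq hv h0
      subst hBC
      refine ⟨A, fun _ y => y, u, ⟨?_, ?_, ?_, ?_⟩, hu⟩
      · intro i; have := h0 i; omega
      · exact fun i y y' h _ => h
      · exact fun i y hy => hy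
      · exact fun x hx hx' => val_congr A rfl hx hx'
    · push_neg at h0
      obtain ⟨i, hib⟩ := h0
      have hCB : C.size i < B.size i := by have := hv.1 i; omega
      obtain ⟨k, hk, hgapk⟩ := gap_exists (v i) hCB
      have hv' := factor hv i hk hgapk (by omega)
      have hsum : (∑ j, (fun j => if j = i then b j - 1 else b j) j) < N := by
        rw [← hb]
        refine Finset.sum_lt_sum (fun j _ => ?_) ⟨i, Finset.mem_univ i, ?_⟩
        · by_cases hj : j = i <;> simp [hj]
        · simp; omega
      obtain ⟨X₀, w₁, w₂, hw₁, hw₂⟩ :=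
        ih _ hsum _ rfl (mdel B (fun _ => k) {i}) C _ hv' A a u hu
      obtain ⟨hsz₁, hmono₁, hbd₁, hval₁⟩ := hw₁
      obtain ⟨hsz₂, hmono₂, hbd₂, hval₂⟩ := hw₂
      have hB'sz : ∀ j, (mdel B (fun _ => k) {i}).size j
          = if j = i then B.size j - 1 else B.size j := by
        intro j; by_cases hj : j = i <;> simp [mdel, hj]
      -- choose the insertion position p
      have hpex : ∃ p, (∀ y, y < k → w₂ i y < p) ∧
          (∀ y, k ≤ y → y < B.size i - 1 → p ≤ w₂ i y) ∧ p ≤ X₀.size i := by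
        rcases Nat.eq_zero_or_pos k with hk0 | hk0
        · exact ⟨0, fun y hy => by omega, fun y _ _ => Nat.zero_le _, Nat.zero_le _⟩
        · refine ⟨w₂ i (k - 1) + 1, ?_, ?_, ?_⟩
          · intro y hy
            rcases Nat.lt_or_ge y (k - 1) with h | h
            · have := hmono₂ i y (k - 1) (by omega) (by rw [hB'sz]; simp; omega)
              omega
            · have : y = k - 1 := by omega
              subst this; omega
          · intro y hy1 hy2
            have := hmono₂ i (k - 1) y (by omega) (by rw [hB'sz]; simp; omega)
            omega
          · have := hbd₂ i (k - 1) (by rw [hB'sz]; simp; omega)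
            omega
      obtain ⟨p, hpk, hkp, hpX⟩ := hpex
      refine ⟨hins X₀ i p (fun yc =>
          if h : ∃ x : Fin d → ℕ, (∀ j, x j < B.size j) ∧ x i = k ∧
              (∀ j, j ≠ i → w₂ j (x j) = yc j)
          then B.val h.choose h.choose_spec.1 else ⟨0, hq0⟩),
        fun j y => if j = i then skip p (w₁ j y) else w₁ j y,
        fun j y => if j = i then (if y < k then w₂ j y else if y = k then p else w₂ j (y - 1) + 1)
          else w₂ j y,
        ⟨?_, ?_, ?_, ?_⟩, ⟨?_, ?_, ?_, ?_⟩⟩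
      · -- sizes for w₁⁺
        intro j
        have h1 := hsz₁ j
        rw [hins_size]
        by_cases hj : j = i
        · subst hj
          simp at h1 ⊢
          have h2 := hib
          omega
        · simp [hj] at h1 ⊢
          omega
      · -- mono for w₁⁺
        intro j y y' h1 h2
        dsimp only
        by_cases hj : j = i
        · subst hj
          rw [if_pos rfl, if_pos rfl]
          exact skip_lt_skip (hmono₁ j y y' h1 h2)
        · rw [if_neg hj, if_neg hj]
          exact hmono₁ j y y' h1 h2
      · -- bound for w₁⁺
        intro j y h1
        dsimp only
        rw [hins_size]
        have h2 := hbd₁ j y h1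
        by_cases hj : j = i
        · subst hj
          rw [if_pos rfl, if_pos rfl]
          have := skip_le p (w₁ j y)
          omega
        · rw [if_neg hj, if_neg hj]
          exact h2
      · -- values for w₁⁺
        intro x hx hx'
        have hb0 : ∀ j, w₁ j (x j) < X₀.size j := fun j => hbd₁ j (x j) (hx j)
        rw [hval₁ x hx hb0]
        refine (hins_val_nep X₀ i p _ _ hx' ?_ _ hb0 ?_).symm
        · dsimp only
          rw [if_pos rfl]
          exact skip_ne p _
        · intro j
          dsimp only
          by_cases hj : j = i
          · subst hj
            simp only [if_pos (rfl : j = j)]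
            simp only [skip]
            split_ifs <;> omega
          · rw [if_neg hj, if_neg hj]
      · -- sizes for w₂⁺
        intro j
        have h1 := hsz₂ j
        rw [hB'sz] at h1
        rw [hins_size]
        by_cases hj : j = i
        · subst hj
          simp at h1 ⊢
          have h2 := hk
          omega
        · simp [hj] at h1 ⊢
          omega
      · -- mono for w₂⁺
        intro j y y' hyy hy'
        dsimp only
        by_cases hj : j = i
        · subst hj
          rw [if_pos rfl, if_pos rfl]
          by_cases h1 : y < k
          · rw [if_pos h1]
            by_cases h2 : y' < k
            · rw [if_pos h2]
              exact hmono₂ j y y' hyy (by rw [hB'sz]; simp; omega)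
            · by_cases h3 : y' = k
              · rw [if_neg h2, if_pos h3]
                exact hpk y h1
              · rw [if_neg h2, if_neg h3]
                have := hmono₂ j y (y' - 1) (by omega) (by rw [hB'sz]; simp; omega)
                omega
          · by_cases h2 : y = k
            · rw [if_neg h1, if_pos h2, if_neg (by omega), if_neg (by omega)]
              have := hkp (y' - 1) (by omega) (by omega)
              omega
            · rw [if_neg h1, if_neg h2, if_neg (by omega), if_neg (by omega)]
              have := hmono₂ j (y - 1) (y' - 1) (by omega) (by rw [hB'sz]; simp; omega)
              omega
        · rw [if_neg hj, if_neg hj]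
          exact hmono₂ j y y' hyy (by rw [hB'sz]; simp [hj]; omega)
      · -- bound for w₂⁺
        intro j y h1
        dsimp only
        rw [hins_size]
        by_cases hj : j = i
        · subst hj
          rw [if_pos rfl, if_pos rfl]
          by_cases h2 : y < k
          · rw [if_pos h2]
            have := hbd₂ j y (by rw [hB'sz]; simp; omega)
            omega
          · by_cases h3 : y = k
            · rw [if_neg h2, if_pos h3]
              omega
            · rw [if_neg h2, if_neg h3]
              have := hbd₂ j (y - 1) (by rw [hB'sz]; simp; omega)
              omega
        · rw [if_neg hj, if_neg hj]
          have := hbd₂ j y (by rw [hB'sz]; simp [hj]; omega)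
          omega
      · -- values for w₂⁺
        intro x hx hx'
        by_cases hxk : x i = k
        · have hyp : (fun j => if j = i then (if x j < k then w₂ j (x j)
              else if x j = k then p else w₂ j (x j - 1) + 1) else w₂ j (x j)) i = p := by
            dsimp only
            rw [if_pos rfl, if_neg (by omega), if_pos hxk]
          rw [hins_val_eqp X₀ i p _ _ hx' hyp]
          have hex2 : ∃ x' : Fin d → ℕ, (∀ j, x' j < B.size j) ∧ x' i = k ∧
              (∀ j, j ≠ i → w₂ j (x' j) = (fun j => if j = i then (if x j < k then w₂ j (x j)
                else if x j = k then p else w₂ j (x j - 1) + 1) else w₂ j (x j)) j) :=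
            ⟨x, hx, hxk, fun j hj => by dsimp only; rw [if_neg hj]⟩
          rw [dif_pos hex2]
          obtain ⟨hc1, hc2, hc3⟩ := hex2.choose_spec
          refine val_congr B ?_ hx hc1
          funext j
          by_cases hj : j = i
          · subst hj
            rw [hxk, hc2]
          · have h3 := hc3 j hj
            dsimp only at h3
            rw [if_neg hj] at h3
            have hb1 : x j < (mdel B (fun _ => k) {i}).size j := by
              rw [hB'sz]; simp [hj]; exact hx j
            have hb2 : hex2.choose j < (mdel B (fun _ => k) {i}).size j := by
              rw [hB'sz]; simp [hj]; exact hc1 j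
            rcases Nat.lt_trichotomy (x j) (hex2.choose j) with h4 | h4 | h4
            · have := hmono₂ j (x j) (hex2.choose j) h4 hb2
              omega
            · exact h4
            · have := hmono₂ j (hex2.choose j) (x j) h4 hb1
              omega
        · -- x i ≠ k : factor through B'
          have hgx : ∀ j, (if j = i then (if x j < k then x j else x j - 1) else x j)
              < (mdel B (fun _ => k) {i}).size j := by
            intro j
            have h1 := hx j
            rw [hB'sz]
            by_cases hj : j = i
            · subst hj
              rw [if_pos rfl, if_pos rfl]
              split_ifs <;> omega
            · rw [if_neg hj, if_neg hj]
              exact h1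
          have e1 : B.val x hx = (mdel B (fun _ => k) {i}).val
              (fun j => if j = i then (if x j < k then x j else x j - 1) else x j) hgx := by
            refine (val_congr B ?_ _ hx).symm
            funext j
            dsimp only
            by_cases hj : j = i
            · subst hj
              rw [if_pos (Finset.mem_singleton_self j), if_pos rfl]
              simp only [skip]
              split_ifs <;> omega
            · rw [if_neg (by simp [hj] : ¬ j ∈ ({i} : Finset (Fin d))), if_neg hj]
          have hb0 : ∀ j, w₂ j (if j = i then (if x j < k then x j else x j - 1) else x j)
              < X₀.size j := fun j => hbd₂ j _ (hgx j)
          rw [e1, hval₂ _ hgx hb0]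
          refine (hins_val_nep X₀ i p _ _ hx' ?_ _ hb0 ?_).symm
          · dsimp only
            rw [if_pos rfl]
            by_cases h1 : x i < k
            · rw [if_pos h1]
              have := hpk (x i) h1
              omega
            · rw [if_neg h1, if_neg hxk]
              have hxB : x i < B.size i := hx i
              have := hkp (x i - 1) (by omega) (by omega)
              omega
          · intro j
            dsimp only
            by_cases hj : j = i
            · subst hj
              simp only [if_pos (rfl : j = j), ite_true]
              by_cases h1 : x j < k
              · rw [if_pos h1, if_pos h1, if_pos (by have := hpk (x j) h1; omega)]
              · rw [if_neg h1, if_neg hxk, if_neg h1]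
                have hxB : x j < B.size j := hx j
                have := hkp (x j - 1) (by omega) (by omega)
                rw [if_neg (by omega)]
                omega
            · rw [if_neg hj, if_neg hj, if_neg hj]

end AuxPart5

section AuxPart6
variable {q d : ℕ}

theorem forwardAux (hq0 : 0 < q) (n : ℕ) :
    ∀ t, 1 ≤ t → t ≤ n →
    ∀ X₁ Xl Y : Arr q d, X₁.size = (fun _ => n) → Xl.size = (fun _ => n) →
    Steps DeletesTo (fun _ => t) X₁ Y → Steps DeletesTo (fun _ => t) Xl Y →
    ∃ Z : ℕ → Arr q d, Z 1 = X₁ ∧ Z (t + 1) = Xl ∧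
      (∀ i, 2 ≤ i → i ≤ t → (Z i).size = fun _ => n) ∧
      (∀ i, 1 ≤ i → i ≤ t → ∃ V, Steps DeletesTo (fun _ => 1) (Z i) V ∧
        Steps DeletesTo (fun _ => 1) (Z (i + 1)) V) := by
  intro t ht
  induction t, ht using Nat.le_induction with
  | base =>
      intro _ X₁ Xl Y h1 h2 hs1 hs2
      refine ⟨fun j => if j = 1 then X₁ else Xl, by simp, by norm_num, ?_, ?_⟩
      · intro i h2i hi1; omega
      · intro i h1i hi1
        have hi : i = 1 := by omega
        subst hi
        refine ⟨Y, by simpa using hs1, by norm_num; exact hs2⟩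
  | succ t ht ih =>
      intro htn X₁ Xl Y h1 h2 hs1 hs2
      obtain ⟨u₁, hu₁⟩ := rep hs1
      obtain ⟨u₂, hu₂⟩ := rep hs2
      have hX₁s : ∀ i, X₁.size i = n := fun i => congrFun h1 i
      have hXls : ∀ i, Xl.size i = n := fun i => congrFun h2 i
      have hYs : ∀ i : Fin d, Y.size i = n - (t + 1) := by
        intro i
        have ha : X₁.size i = Y.size i + (t + 1) := hu₁.1 i
        have := hX₁s i; omega
      -- build W from X₁'s representation
      have hg1 : ∀ i : Fin d, ∃ kk, kk < X₁.size i ∧ ∀ y, y < Y.size i → u₁ i y ≠ kk := by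
        intro i
        apply gap_exists
        have ha : X₁.size i = Y.size i + (t + 1) := hu₁.1 i
        omega
      choose k₁ hk₁ hgap₁ using hg1
      obtain ⟨W, w, vW, hWsize, hWrel, hWYrel⟩ :=
        extend_sel hq0 hu₁ k₁ hk₁ hgap₁ (fun i => by omega)
      have hWrel' : SelRel (fun _ => t) w X₁ W := by
        have he : (fun i : Fin d => t + 1 - 1) = (fun _ : Fin d => t) := by funext; omega
        rwa [he] at hWrel
      -- build M from Xl's representation
      have hg2 : ∀ i : Fin d, ∃ kk, kk < Xl.size i ∧ ∀ y, y < Y.size i → u₂ i y ≠ kk := by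
        intro i
        apply gap_exists
        have ha : Xl.size i = Y.size i + (t + 1) := hu₂.1 i
        omega
      choose k₂ hk₂ hgap₂ using hg2
      obtain ⟨hMrel, hMsteps⟩ := shrink_all hu₂ k₂ hk₂ hgap₂ (fun i => by omega)
      have hMrel' : SelRel (fun _ => t)
          (fun i y => if u₂ i y < k₂ i then u₂ i y else u₂ i y - 1)
          (mdel Xl k₂ Finset.univ) Y := by
        have he : (fun i : Fin d => t + 1 - 1) = (fun _ : Fin d => t) := by funext; omega
        rwa [he] at hMrel
      -- pushout over Y
      obtain ⟨X', w₁, w₂, hXM, hXW⟩ :=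
        pushout hq0 _ (fun _ : Fin d => (1 : ℕ)) rfl W Y vW hWYrel
          (mdel Xl k₂ Finset.univ) (fun _ => t) _ hMrel'
      have hMsize : ∀ i, (mdel Xl k₂ Finset.univ).size i = n - 1 := by
        intro i
        simp [mdel]
        have := hXls i
        omega
      have hX'size : X'.size = (fun _ : Fin d => n) := by
        funext i
        have ha : X'.size i = (mdel Xl k₂ Finset.univ).size i + 1 := hXM.1 i
        have hb := hMsize i
        have hc := hXls i
        have hd2 := hX₁s i
        show X'.size i = n
        omega
      have hstep1 : Steps DeletesTo (fun _ => t) X₁ W := selrel_steps hWrel'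
      have hstep2 : Steps DeletesTo (fun _ => t) X' W := selrel_steps hXW
      obtain ⟨Z, hZ1, hZt, hZcube, hZlink⟩ := ih (by omega) X₁ X' W h1 hX'size hstep1 hstep2
      refine ⟨fun j => if j = t + 2 then Xl else Z j, ?_, ?_, ?_, ?_⟩
      · show (if 1 = t + 2 then Xl else Z 1) = X₁
        rw [if_neg (by omega)]; exact hZ1
      · show (if t + 1 + 1 = t + 2 then Xl else Z (t + 1 + 1)) = Xl
        rw [if_pos (by omega)]
      · intro i hi2 hit
        show (if i = t + 2 then Xl else Z i).size = fun _ => n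
        rw [if_neg (by omega)]
        rcases Nat.lt_or_ge i (t + 1) with h | h
        · exact hZcube i hi2 (by omega)
        · have : i = t + 1 := by omega
          rw [this, hZt, hX'size]
      · intro i hi1 hit
        show ∃ V, Steps DeletesTo (fun _ => 1) (if i = t + 2 then Xl else Z i) V ∧
          Steps DeletesTo (fun _ => 1) (if i + 1 = t + 2 then Xl else Z (i + 1)) V
        rcases Nat.lt_or_ge i (t + 1) with h | h
        · have h3 := hZlink i hi1 (by omega)
          rw [if_neg (by omega), if_neg (by omega)]
          exact h3
        · have : i = t + 1 := by omega
          subst this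
          rw [if_neg (by omega), if_pos (by omega), hZt]
          exact ⟨mdel Xl k₂ Finset.univ, selrel_steps hXM, hMsteps⟩

theorem backAux (n t : ℕ) (htn : t ≤ n) (Z : ℕ → Arr q d)
    (hcube : ∀ i, 2 ≤ i → i ≤ t → (Z i).size = fun _ => n)
    (hZ1 : (Z 1).size = fun _ => n) (hZl : (Z (t + 1)).size = fun _ => n)
    (hlink : ∀ i, 1 ≤ i → i ≤ t → ∃ V, Steps DeletesTo (fun _ => 1) (Z i) V ∧
      Steps DeletesTo (fun _ => 1) (Z (i + 1)) V) :
    ∀ j, 1 ≤ j → j ≤ t → ∃ V, Steps DeletesTo (fun _ => j) (Z 1) V ∧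
      Steps DeletesTo (fun _ => j) (Z (j + 1)) V := by
  intro j hj
  induction j, hj using Nat.le_induction with
  | base => intro _; exact hlink 1 le_rfl (by omega)
  | succ j hj ihj =>
      intro hjt
      obtain ⟨V, hV1, hV2⟩ := ihj (by omega)
      obtain ⟨W, hW1, hW2⟩ := hlink (j + 1) (by omega) (by omega)
      obtain ⟨vv, hvv⟩ := rep hW1
      have hZs : (Z (j + 1)).size = fun _ => n := hcube (j + 1) (by omega) (by omega)
      have hWs : ∀ i, j ≤ W.size i := by
        intro i
        have ha : (Z (j + 1)).size i = W.size i + 1 := hvv.1 i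
        have hb := congrFun hZs i
        omega
      obtain ⟨V', v', hst, hrel⟩ := diamond hV2 hvv hWs
      have hstep : Steps DeletesTo (fun _ => 1) V V' := selrel_steps hrel
      refine ⟨V', ?_, ?_⟩
      · have := steps_trans hV1 hstep
        have he : ((fun _ : Fin d => j) + (fun _ : Fin d => 1)) = (fun _ : Fin d => j + 1) := by
          funext i; simp
        rwa [he] at this
      · have := steps_trans hW2 hst
        have he : ((fun _ : Fin d => 1) + (fun _ : Fin d => j)) = (fun _ : Fin d => j + 1) := by
          funext i; simp [Nat.add_comm]
        rwa [he] at this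

end AuxPart6

/-- **Appendix Claim 4.** For `1 ≤ t ≤ n` and arrays `X₁, X_{t+1} ∈ Σ_q^{n^{⊗d}}`,
`D_{t𝟏}(X₁) ∩ D_{t𝟏}(X_{t+1}) ≠ ∅` iff there exist `t − 1` arrays
`X₂, …, X_t ∈ Σ_q^{n^{⊗d}}` with `D_𝟏(X_i) ∩ D_𝟏(X_{i+1}) ≠ ∅` for all `1 ≤ i ≤ t`. -/
theorem statement15 (q d n t : ℕ) (hq : 2 ≤ q) (hd : 1 ≤ d)
    (ht : 1 ≤ t) (htn : t ≤ n)
    (X₁ Xlast : Arr q d) (hX₁ : X₁ ∈ cube q d n) (hXlast : Xlast ∈ cube q d n) :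
    (delBall (fun _ => t) X₁ ∩ delBall (fun _ => t) Xlast).Nonempty ↔
    ∃ Z : ℕ → Arr q d, Z 1 = X₁ ∧ Z (t + 1) = Xlast ∧
      (∀ i, 2 ≤ i → i ≤ t → Z i ∈ cube q d n) ∧
      (∀ i, 1 ≤ i → i ≤ t →
        (delBall (fun _ => (1 : ℕ)) (Z i) ∩
          delBall (fun _ => (1 : ℕ)) (Z (i + 1))).Nonempty) := by
  constructor
  · rintro ⟨Y, hY1, hY2⟩
    obtain ⟨Z, hZ1, hZt, hZcube, hZlink⟩ :=
      forwardAux (by omega : 0 < q) n t ht htn X₁ Xlast Y hX₁ hXlast hY1 hY2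
    refine ⟨Z, hZ1, hZt, hZcube, ?_⟩
    intro i hi1 hit
    obtain ⟨V, hV1, hV2⟩ := hZlink i hi1 hit
    exact ⟨V, hV1, hV2⟩
  · rintro ⟨Z, hZ1, hZt, hZcube, hZlink⟩
    have hlink' : ∀ i, 1 ≤ i → i ≤ t → ∃ V, Steps DeletesTo (fun _ => 1) (Z i) V ∧
        Steps DeletesTo (fun _ => 1) (Z (i + 1)) V := by
      intro i h1 h2
      obtain ⟨V, hV1, hV2⟩ := hZlink i h1 h2
      exact ⟨V, hV1, hV2⟩
    obtain ⟨V, hV1, hV2⟩ := backAux n t htn Z hZcube (by rw [hZ1]; exact hX₁)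
      (by rw [hZt]; exact hXlast) hlink' t ht le_rfl
    rw [hZ1] at hV1
    rw [hZt] at hV2
    exact ⟨V, hV1, hV2⟩
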